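/- Set T_q(l) = q^{-l} + (-1)^l q^{-l} - q^l + (-1)^l q^l - 2(-1)^l (note T_q(0) = 0). Then for every nonnegative integer n and every x ≠ 0, Rubin's q-differential operator applied to the higher-order q-Genocchi polynomial satisfies ∂_q G_{n,q}^{(α)}(x) = (1/(2(1-q))) · Σ_{l=1}^{n} binom(n,l)_q · T_q(l) · x^{l-1} · G_{n-l,q}^{(α)}, where G_{n,q}^{(α)} = G_{n,q}^{(α)}(0). -/

import Mathlib

open PowerSeries Finset

/-- The `q`-number `[n]_q = (1 - q^n)/(1 - q)`. -/
noncomputable def qNum (q : ℂ) (n : ℕ) : ℂ := (1 - q ^ n) / (1 - q)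

/-- The `q`-factorial `[n]_q! = [n]_q [n-1]_q ⋯ [1]_q`, with `[0]_q! = 1`. -/
noncomputable def qFact (q : ℂ) : ℕ → ℂ
  | 0 => 1
  | n + 1 => qNum q (n + 1) * qFact q n

/-- The Gaussian `q`-binomial coefficient `[n]_q! / ([k]_q! [n-k]_q!)`. -/
noncomputable def qBinom (q : ℂ) (n k : ℕ) : ℂ :=
  qFact q n / (qFact q k * qFact q (n - k))

/-- `e_q(zx)` as a formal power series in `z`: `∑ x^l z^l / [l]_q!`. -/
noncomputable def qExpGF (q x : ℂ) : PowerSeries ℂ :=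
  PowerSeries.mk fun l => x ^ l / qFact q l

/-- The generating function `([2]_q z / (e_q(z)+1))^α e_q(zx)` of the
higher-order `q`-Genocchi polynomials, as a formal power series in `z`. -/
noncomputable def qGenocchiGF (q : ℂ) (α : ℕ) (x : ℂ) : PowerSeries ℂ :=
  (PowerSeries.C (qNum q 2) * PowerSeries.X * (qExpGF q 1 + 1)⁻¹) ^ α * qExpGF q x

/-- `T_q(l) = q^{-l} + (-1)^l q^{-l} - q^l + (-1)^l q^l - 2(-1)^l` (so `T_q(0) = 0`). -/
noncomputable def Tq (q : ℂ) (l : ℕ) : ℂ :=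
  q ^ (-(l : ℤ)) + (-1) ^ l * q ^ (-(l : ℤ)) - q ^ l + (-1) ^ l * q ^ l - 2 * (-1) ^ l

/-- Auxiliary: the `q`-factorial is nonzero when `‖q‖ < 1`. -/
lemma qFact_ne_zero' (q : ℂ) (hq1 : ‖q‖ < 1) (n : ℕ) : qFact q n ≠ 0 := by
  have hq : (1 : ℂ) - q ≠ 0 := by
    intro h
    have : q = 1 := by linear_combination -h
    rw [this] at hq1; norm_num at hq1
  induction n with
  | zero => simp [qFact]
  | succ m ih =>
    have h1 : q ^ (m + 1) ≠ 1 := by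
      intro h
      have : ‖q ^ (m+1)‖ < 1 := by
        rw [norm_pow]
        exact pow_lt_one₀ (norm_nonneg q) hq1 (Nat.succ_ne_zero m)
      rw [h] at this; norm_num at this
    exact mul_ne_zero (div_ne_zero (sub_ne_zero.mpr fun h => h1 h.symm) hq) ih

/-- Auxiliary: expansion of `G n x` in terms of `q`-Genocchi numbers. -/
lemma qGenocchi_expand (q : ℂ) (hq1 : ‖q‖ < 1)
    (α : ℕ) (G : ℕ → ℂ → ℂ)
    (hG : ∀ x : ℂ, PowerSeries.mk (fun n => G n x / qFact q n) = qGenocchiGF q α x) :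
    ∀ (x : ℂ) (n : ℕ), G n x = ∑ l ∈ Finset.range (n+1), qBinom q n l * x ^ l * G (n - l) 0 := by
  have hF := qFact_ne_zero' q hq1
  have hzero : qExpGF q 0 = 1 := by
    ext n
    cases n <;> simp [qExpGF, qFact, coeff_mk, PowerSeries.coeff_one]
  have hsplit : ∀ x, qGenocchiGF q α x = qGenocchiGF q α 0 * qExpGF q x := by
    intro x
    unfold qGenocchiGF
    rw [hzero, mul_one]
  intro x n
  have h1 := congrArg (PowerSeries.coeff n) (hG x)
  rw [hsplit x, ← hG 0, PowerSeries.coeff_mul] at h1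
  simp only [coeff_mk, qExpGF] at h1
  rw [Finset.Nat.sum_antidiagonal_eq_sum_range_succ_mk] at h1
  have h2 : G n x = qFact q n * ∑ k ∈ Finset.range (n+1),
      (G k 0 / qFact q k) * (x ^ (n-k) / qFact q (n-k)) := by
    rw [← h1, mul_div_cancel₀ _ (hF n)]
  rw [h2, Finset.mul_sum, ← Finset.sum_range_reflect]
  apply Finset.sum_congr rfl
  intro l hl
  have hln : l ≤ n := by simp at hl; omega
  have e0 : n + 1 - 1 - l = n - l := by omega
  have e1 : n - (n - l) = l := by omega
  rw [e0, e1, qBinom]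
  field_simp

/-- Rubin's `q`-differential operator applied to the higher-order `q`-Genocchi
polynomial: for every `n ≥ 0` and `x ≠ 0`,
`∂_q G_{n,q}^{(α)}(x) = (1/(2(1-q))) ∑_{l=1}^{n} binom(n,l)_q T_q(l) x^{l-1} G_{n-l,q}^{(α)}`,
where `G_{m,q}^{(α)} = G_{m,q}^{(α)}(0)`. -/
theorem rubin_qDeriv_qGenocchi (q : ℂ) (hq0 : 0 < ‖q‖) (hq1 : ‖q‖ < 1)
    (α : ℕ) (hα : 0 < α) (G : ℕ → ℂ → ℂ)
    (hG : ∀ x : ℂ, PowerSeries.mk (fun n => G n x / qFact q n) = qGenocchiGF q α x) :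
    ∀ (n : ℕ) (x : ℂ), x ≠ 0 →
      (G n (q⁻¹ * x) + G n (-(q⁻¹ * x)) - G n (q * x) + G n (-(q * x)) - 2 * G n (-x)) /
          (2 * (1 - q) * x) =
        (1 / (2 * (1 - q))) *
          ∑ l ∈ Finset.Icc 1 n, qBinom q n l * Tq q l * x ^ (l - 1) * G (n - l) 0 := by
  intro n x hx
  have hqne : q ≠ 0 := by
    intro h; rw [h] at hq0; simp at hq0
  have hq : (1 : ℂ) - q ≠ 0 := by
    intro h
    have : q = 1 := by linear_combination -h
    rw [this] at hq1; norm_num at hq1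
  have hB := qGenocchi_expand q hq1 α G hG
  -- Combine the five expansions into one sum with T_q
  have hcomb : G n (q⁻¹ * x) + G n (-(q⁻¹ * x)) - G n (q * x) + G n (-(q * x)) - 2 * G n (-x)
      = ∑ l ∈ Finset.range (n+1), qBinom q n l * Tq q l * x ^ l * G (n - l) 0 := by
    rw [hB (q⁻¹ * x) n, hB (-(q⁻¹ * x)) n, hB (q * x) n, hB (-(q * x)) n, hB (-x) n,
      Finset.mul_sum, ← Finset.sum_add_distrib, ← Finset.sum_sub_distrib,
      ← Finset.sum_add_distrib, ← Finset.sum_sub_distrib]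
    apply Finset.sum_congr rfl
    intro l _
    have hT : (q⁻¹*x)^l + (-(q⁻¹*x))^l - (q*x)^l + (-(q*x))^l - 2*(-x)^l = Tq q l * x^l := by
      rw [Tq, zpow_neg, zpow_natCast, neg_pow (q⁻¹ * x), neg_pow (q * x), neg_pow x,
        mul_pow q⁻¹ x, mul_pow q x, inv_pow]
      ring
    linear_combination qBinom q n l * G (n - l) 0 * hT
  -- Drop the l = 0 term (T_q(0) = 0) and pull out a factor x
  have hIcc : ∑ l ∈ Finset.range (n+1), qBinom q n l * Tq q l * x ^ l * G (n - l) 0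
      = x * ∑ l ∈ Finset.Icc 1 n, qBinom q n l * Tq q l * x ^ (l - 1) * G (n - l) 0 := by
    have hins : Finset.range (n+1) = insert 0 (Finset.Icc 1 n) := by
      ext m; simp; omega
    rw [hins, Finset.sum_insert (by simp), Finset.mul_sum]
    have hT0 : Tq q 0 = 0 := by simp [Tq]; ring
    rw [hT0]
    simp only [mul_zero, zero_mul, zero_add]
    apply Finset.sum_congr rfl
    intro l hl
    have hl1 : 1 ≤ l := (Finset.mem_Icc.mp hl).1
    have : x ^ l = x * x ^ (l - 1) := by
      conv_lhs => rw [show l = (l - 1) + 1 by omega]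
      rw [pow_succ]; ring
    rw [this]; ring
  rw [hcomb, hIcc]
  have h2x : (2 : ℂ) * (1 - q) * x ≠ 0 := by
    apply mul_ne_zero (mul_ne_zero two_ne_zero hq) hx
  field_simp
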